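/- (Lemma 4.) Let M ∈ ℝ^{m×n} have rank ρ with SVD M = UΣVᵀ and strictly positive leverage scores μ_i, ν_j. Let Z ∈ ℝ^{m×n} be a fixed matrix. Let (δ_ij) be independent {0,1}-valued random variables with P(δ_ij = 1) = q_ij, where q_ij ≥ min{ c₀ log(m+n) · L_ij , 1 } and L_ij = (μ_iρ/m) + (ν_jρ/n) − (μ_iρ/m)(ν_jρ/n), and let Ω = {(i,j) : δ_ij = 1} with sampling operator R_Ω built from the weights q_ij. Then for any c > 3 and c₀ ≥ 68c, with probability at least 1 − (m+n)^{3−c}, ‖(P_T R_Ω − P_T)(Z)‖_{μ(∞)} ≤ (1/2) ‖Z‖_{μ(∞)}. -/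

import Mathlib

open Matrix MeasureTheory ProbabilityTheory

noncomputable def frobNorm {m n : ℕ} (X : Matrix (Fin m) (Fin n) ℝ) : ℝ :=
  Real.sqrt (∑ i, ∑ j, X i j ^ 2)

noncomputable def eNorm {k : ℕ} (v : Fin k → ℝ) : ℝ := Real.sqrt (∑ i, v i ^ 2)

/-- The spectral norm (largest singular value) of a matrix. -/
noncomputable def specNorm {a b : ℕ} (X : Matrix (Fin a) (Fin b) ℝ) : ℝ :=
  ⨆ v : Fin b → ℝ, eNorm (X.mulVec v) / eNorm v

/-- Operator norm of a map on matrices, with respect to the Frobenius norm. -/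
noncomputable def opNorm {m n : ℕ}
    (A : Matrix (Fin m) (Fin n) ℝ → Matrix (Fin m) (Fin n) ℝ) : ℝ :=
  ⨆ X, frobNorm (A X) / frobNorm X

/-- The orthogonal projection `P_T(X) = UUᵀX + XVVᵀ − UUᵀXVVᵀ`. -/
noncomputable def PT {m n ρ : ℕ} (U : Matrix (Fin m) (Fin ρ) ℝ) (V : Matrix (Fin n) (Fin ρ) ℝ)
    (X : Matrix (Fin m) (Fin n) ℝ) : Matrix (Fin m) (Fin n) ℝ :=
  U * Uᵀ * X + X * (V * Vᵀ) - U * Uᵀ * X * (V * Vᵀ)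

open Classical in
/-- The sampling operator `R_Ω(X) = ∑_{(i,j)∈Ω} (1/q_ij) X_ij e_i e_jᵀ`. -/
noncomputable def RΩ {m n : ℕ} (Ω : Set (Fin m × Fin n)) (q : Fin m → Fin n → ℝ)
    (X : Matrix (Fin m) (Fin n) ℝ) : Matrix (Fin m) (Fin n) ℝ :=
  fun i j => if (i, j) ∈ Ω then (q i j)⁻¹ * X i j else 0

/-- The weighted norm `‖Z‖_{μ(∞,2)}`. -/
noncomputable def muNormInf2 {m n : ℕ} (ρ : ℕ) (μ : Fin m → ℝ) (ν : Fin n → ℝ)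
    (Z : Matrix (Fin m) (Fin n) ℝ) : ℝ :=
  max (⨆ i : Fin m, Real.sqrt ((m : ℝ) / (μ i * ρ)) * eNorm (fun j => Z i j))
      (⨆ j : Fin n, Real.sqrt ((n : ℝ) / (ν j * ρ)) * eNorm (fun i => Z i j))

/-- The weighted norm `‖Z‖_{μ(∞)}`. -/
noncomputable def muNormInf {m n : ℕ} (ρ : ℕ) (μ : Fin m → ℝ) (ν : Fin n → ℝ)
    (Z : Matrix (Fin m) (Fin n) ℝ) : ℝ :=
  ⨆ i : Fin m, ⨆ j : Fin n,
    |Z i j| * Real.sqrt ((m : ℝ) / (μ i * ρ)) * Real.sqrt ((n : ℝ) / (ν j * ρ))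


section AuxLemmas
open MeasureTheory ProbabilityTheory Real


open MeasureTheory ProbabilityTheory Real

lemma exp_le_quad {u : ℝ} (h : |u| ≤ 1) : Real.exp u ≤ 1 + u + u ^ 2 := by
  have h2 := Real.exp_bound h (n := 2) (by norm_num)
  have hs : ∑ i ∈ Finset.range 2, u ^ i / i.factorial = 1 + u := by
    simp [Finset.sum_range_succ]
  rw [hs] at h2
  have h3 : Real.exp u - (1 + u) ≤ |u| ^ 2 * ((2 : ℕ).succ / ((2:ℕ).factorial * 2)) :=
    (le_abs_self _).trans h2
  have : ((2:ℕ).succ : ℝ) / ((2:ℕ).factorial * 2) = 3 / 4 := by norm_num [Nat.factorial]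
  rw [this, sq_abs] at h3
  nlinarith [sq_nonneg u]

lemma bool_integral {Ω' : Type*} [MeasurableSpace Ω'] (P : Measure Ω') [IsProbabilityMeasure P]
    (d : Ω' → Bool) (hd : Measurable d) {qq : ℝ} (hq0 : 0 ≤ qq) (hq1 : qq ≤ 1)
    (hb : P {ω | d ω = true} = ENNReal.ofReal qq) (f : Bool → ℝ) :
    ∫ ω, f (d ω) ∂P = qq * f true + (1 - qq) * f false := by
  have hS : MeasurableSet {ω | d ω = true} := hd (measurableSet_singleton true)
  have hrw : (fun ω => f (d ω)) = (fun ω =>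
      Set.indicator {ω | d ω = true} (fun _ => f true) ω +
      Set.indicator {ω | d ω = true}ᶜ (fun _ => f false) ω) := by
    funext ω
    by_cases h : d ω = true <;>
      simp [Set.indicator_apply, h, Set.mem_setOf_eq, Set.mem_compl_iff]
  have h1 : Integrable (Set.indicator {ω | d ω = true} (fun _ => f true)) P :=
    (integrable_const (f true)).indicator hS
  have h2 : Integrable (Set.indicator {ω | d ω = true}ᶜ (fun _ => f false)) P :=
    (integrable_const (f false)).indicator hS.compl
  rw [hrw, integral_add h1 h2, integral_indicator_const _ hS, integral_indicator_const _ hS.compl]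
  have hc : P {ω | d ω = true}ᶜ = 1 - ENNReal.ofReal qq := by
    rw [measure_compl hS (measure_ne_top _ _), hb, measure_univ]
  rw [measureReal_def, measureReal_def, hb, hc]
  have h3 : ((1 : ENNReal) - ENNReal.ofReal qq).toReal = 1 - qq := by
    rw [ENNReal.toReal_sub_of_le (by simpa using hq1) (by simp)]
    simp [ENNReal.toReal_ofReal hq0]
  rw [h3, ENNReal.toReal_ofReal hq0]
  simp [smul_eq_mul]

lemma tail_bound {ι : Type*} [Fintype ι] {Ω' : Type*} [MeasurableSpace Ω'] (P : Measure Ω')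
    [IsProbabilityMeasure P]
    (δ : ι → Ω' → Bool) (hmeas : ∀ i, Measurable (δ i))
    (hindep : iIndepFun δ P)
    (q : ι → ℝ) (hq0 : ∀ i, 0 < q i) (hq1 : ∀ i, q i ≤ 1)
    (hbern : ∀ i, P {ω | δ i ω = true} = ENNReal.ofReal (q i))
    (w : ι → ℝ) (t ε : ℝ) (ht : 0 ≤ t)
    (hx : ∀ i, |t * (w i * (1 - q i) / q i)| ≤ 1)
    (hy : ∀ i, q i < 1 → |t * w i| ≤ 1) :
    P {ω | ε ≤ ∑ i, w i * (if δ i ω then (q i)⁻¹ - 1 else -1)}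
      ≤ ENNReal.ofReal (Real.exp (-t * ε + t ^ 2 * ∑ i, w i ^ 2 * (1 - q i) / q i)) := by
  classical
  set Y : ι → Ω' → ℝ := fun i ω => w i * (if δ i ω then (q i)⁻¹ - 1 else -1) with hYdef
  have hYm : ∀ i, Measurable (Y i) := fun i =>
    (measurable_of_countable (fun b : Bool => w i * (if b then (q i)⁻¹ - 1 else -1))).comp
      (hmeas i)
  have hYindep : iIndepFun Y P :=
    hindep.comp (fun i (b : Bool) => w i * (if b then (q i)⁻¹ - 1 else -1))
      (fun i => measurable_of_countable _)
  -- single-variable mgf bound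
  have hmgf : ∀ i, mgf (Y i) P t ≤ Real.exp (t ^ 2 * (w i ^ 2 * (1 - q i) / q i)) := by
    intro i
    have hqi := hq0 i
    have hmgf_eq : mgf (Y i) P t =
        q i * Real.exp (t * (w i * ((q i)⁻¹ - 1)))
          + (1 - q i) * Real.exp (t * (w i * (-1))) := by
      have hb := bool_integral P (δ i) (hmeas i) (hq0 i).le (hq1 i) (hbern i)
        (fun b => Real.exp (t * (w i * (if b then (q i)⁻¹ - 1 else -1))))
      have hd : mgf (Y i) P t = ∫ ω,
          (fun b => Real.exp (t * (w i * (if b then (q i)⁻¹ - 1 else -1)))) (δ i ω) ∂P := rfl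
      rw [hd, hb]
      norm_num
    have hxv : w i * ((q i)⁻¹ - 1) = w i * (1 - q i) / q i := by
      field_simp
    rw [hmgf_eq, hxv]
    set x : ℝ := w i * (1 - q i) / q i with hxd
    have e1 : Real.exp (t * x) ≤ 1 + t * x + (t * x) ^ 2 := by
      apply exp_le_quad
      simpa [hxd, mul_div_assoc] using hx i
    have key : ∀ v : ℝ, 1 + t ^ 2 * v ≤ Real.exp (t ^ 2 * v) :=
      fun v => by linarith [Real.add_one_le_exp (t ^ 2 * v)]
    rcases lt_or_eq_of_le (hq1 i) with hlt | heq
    · have e2 : Real.exp (t * (w i * (-1))) ≤ 1 + t * (w i * (-1)) + (t * (w i * (-1))) ^ 2 := by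
        apply exp_le_quad
        have := hy i hlt
        calc |t * (w i * (-1))| = |t * w i| := by rw [abs_mul, abs_mul, abs_neg, abs_one,
          mul_one, ← abs_mul]
        _ ≤ 1 := this
      have hcomb : q i * Real.exp (t * x) + (1 - q i) * Real.exp (t * (w i * (-1)))
          ≤ q i * (1 + t * x + (t * x) ^ 2)
            + (1 - q i) * (1 + t * (w i * (-1)) + (t * (w i * (-1))) ^ 2) := by
        have h1 : 0 ≤ q i := hqi.le
        have h2 : 0 ≤ 1 - q i := by linarith
        exact add_le_add (mul_le_mul_of_nonneg_left e1 h1) (mul_le_mul_of_nonneg_left e2 h2)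
      have hid : q i * (1 + t * x + (t * x) ^ 2)
            + (1 - q i) * (1 + t * (w i * (-1)) + (t * (w i * (-1))) ^ 2)
          = 1 + t ^ 2 * (w i ^ 2 * (1 - q i) / q i) := by
        rw [hxd]; field_simp; ring
      calc q i * Real.exp (t * x) + (1 - q i) * Real.exp (t * (w i * (-1)))
          ≤ 1 + t ^ 2 * (w i ^ 2 * (1 - q i) / q i) := by rw [← hid]; exact hcomb
        _ ≤ _ := key _
    · have hx0 : x = 0 := by rw [hxd, heq]; ring
      rw [hx0, heq]
      norm_num
  -- integrability of exp(t * sum)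
  set B : ℝ := ∑ i, |w i| * ((q i)⁻¹ + 1) with hBdef
  have hYbd : ∀ i ω, |Y i ω| ≤ |w i| * ((q i)⁻¹ + 1) := by
    intro i ω
    have hqi := hq0 i
    have hinv : (0:ℝ) ≤ (q i)⁻¹ := (inv_nonneg).2 hqi.le
    rw [hYdef]
    simp only [abs_mul]
    apply mul_le_mul_of_nonneg_left _ (abs_nonneg _)
    by_cases h : δ i ω <;> simp [h]
    · rw [abs_sub_comm]
      calc |1 - (q i)⁻¹| ≤ |(1:ℝ)| + |(q i)⁻¹| := abs_sub _ _
        _ ≤ (q i)⁻¹ + 1 := by rw [abs_one, abs_of_nonneg hinv]; linarith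
    · linarith
  have hSbd : ∀ ω, |∑ i, Y i ω| ≤ B := by
    intro ω
    calc |∑ i, Y i ω| ≤ ∑ i, |Y i ω| := Finset.abs_sum_le_sum_abs _ _
      _ ≤ B := Finset.sum_le_sum (fun i _ => hYbd i ω)
  have hSm : Measurable (fun ω => ∑ i, Y i ω) := by
    apply Finset.measurable_sum
    exact fun i _ => hYm i
  have hint : Integrable (fun ω => Real.exp (t * ∑ i, Y i ω)) P := by
    apply Integrable.mono' (integrable_const (Real.exp (|t| * B)))
    · exact (Real.measurable_exp.comp (measurable_const.mul hSm)).aestronglyMeasurable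
    · apply ae_of_all
      intro ω
      rw [Real.norm_eq_abs, Real.abs_exp]
      apply Real.exp_le_exp.2
      calc t * ∑ i, Y i ω ≤ |t * ∑ i, Y i ω| := le_abs_self _
        _ = |t| * |∑ i, Y i ω| := abs_mul _ _
        _ ≤ |t| * B := mul_le_mul_of_nonneg_left (hSbd ω) (abs_nonneg _)
  -- Chernoff
  have hch := measure_ge_le_exp_mul_mgf (X := fun ω => ∑ i, Y i ω) (μ := P) ε ht hint
  have hXeq : (fun ω => ∑ i, Y i ω) = ∑ i, Y i := by
    funext ω; simp [Finset.sum_apply]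
  have hmgfs : mgf (fun ω => ∑ i, Y i ω) P t = ∏ i, mgf (Y i) P t := by
    rw [hXeq]
    exact hYindep.mgf_sum hYm Finset.univ
  have hprod : ∏ i, mgf (Y i) P t ≤ Real.exp (t ^ 2 * ∑ i, w i ^ 2 * (1 - q i) / q i) := by
    calc ∏ i, mgf (Y i) P t ≤ ∏ i, Real.exp (t ^ 2 * (w i ^ 2 * (1 - q i) / q i)) :=
          Finset.prod_le_prod (fun i _ => mgf_nonneg) (fun i _ => hmgf i)
      _ = Real.exp (∑ i, t ^ 2 * (w i ^ 2 * (1 - q i) / q i)) := by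
          rw [Real.exp_sum]
      _ = _ := by rw [Finset.mul_sum]
  have hreal : (P {ω | ε ≤ ∑ i, Y i ω}).toReal
      ≤ Real.exp (-t * ε + t ^ 2 * ∑ i, w i ^ 2 * (1 - q i) / q i) := by
    calc (P {ω | ε ≤ ∑ i, Y i ω}).toReal
        ≤ Real.exp (-t * ε) * mgf (fun ω => ∑ i, Y i ω) P t := hch
      _ ≤ Real.exp (-t * ε) * Real.exp (t ^ 2 * ∑ i, w i ^ 2 * (1 - q i) / q i) := by
          rw [hmgfs]
          exact mul_le_mul_of_nonneg_left hprod (Real.exp_pos _).le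
      _ = _ := by rw [← Real.exp_add]
  calc P {ω | ε ≤ ∑ i, Y i ω} = ENNReal.ofReal ((P {ω | ε ≤ ∑ i, Y i ω}).toReal) :=
        (ENNReal.ofReal_toReal (measure_ne_top _ _)).symm
    _ ≤ _ := ENNReal.ofReal_le_ofReal hreal




lemma gram_diag {m ρ : ℕ} (U : Matrix (Fin m) (Fin ρ) ℝ) (a : Fin m) :
    (U * Uᵀ) a a = ∑ k, U a k ^ 2 := by
  simp [Matrix.mul_apply, Matrix.transpose_apply, sq]

lemma gram_symm {m ρ : ℕ} (U : Matrix (Fin m) (Fin ρ) ℝ) (a i : Fin m) :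
    (U * Uᵀ) i a = (U * Uᵀ) a i := by
  simp only [Matrix.mul_apply, Matrix.transpose_apply]
  exact Finset.sum_congr rfl (fun k _ => mul_comm _ _)

lemma gram_sq_row {m ρ : ℕ} (U : Matrix (Fin m) (Fin ρ) ℝ) (hU : Uᵀ * U = 1) (a : Fin m) :
    ∑ i, ((U * Uᵀ) a i) ^ 2 = (U * Uᵀ) a a := by
  have hP : (U * Uᵀ) * (U * Uᵀ) = U * Uᵀ := by
    calc (U * Uᵀ) * (U * Uᵀ) = U * (Uᵀ * U) * Uᵀ := by
          rw [Matrix.mul_assoc, Matrix.mul_assoc, Matrix.mul_assoc]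
      _ = U * Uᵀ := by rw [hU, Matrix.mul_one]
  have h2 : ((U * Uᵀ) * (U * Uᵀ)) a a = ∑ i, (U * Uᵀ) a i * (U * Uᵀ) i a :=
    Matrix.mul_apply
  rw [hP] at h2
  rw [h2]
  exact Finset.sum_congr rfl (fun i _ => by rw [sq, gram_symm U a i])

lemma row_le_one {m ρ : ℕ} (U : Matrix (Fin m) (Fin ρ) ℝ) (hU : Uᵀ * U = 1) (a : Fin m) :
    ∑ k, U a k ^ 2 ≤ 1 := by
  have h1 := gram_sq_row U hU a
  have h2 : ((U * Uᵀ) a a) ^ 2 ≤ ∑ i, ((U * Uᵀ) a i) ^ 2 :=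
    Finset.single_le_sum (f := fun i => ((U * Uᵀ) a i) ^ 2)
      (fun i _ => sq_nonneg _) (Finset.mem_univ a)
  rw [h1] at h2
  have h3 : (0:ℝ) ≤ (U * Uᵀ) a a := by
    rw [gram_diag]; positivity
  have h4 : (U * Uᵀ) a a ≤ 1 := by nlinarith
  rw [gram_diag] at h4
  exact h4

lemma gram_cs {m ρ : ℕ} (U : Matrix (Fin m) (Fin ρ) ℝ) (a i : Fin m) :
    ((U * Uᵀ) a i) ^ 2 ≤ (∑ k, U a k ^ 2) * (∑ k, U i k ^ 2) := by
  have : (U * Uᵀ) a i = ∑ k, U a k * U i k := by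
    simp [Matrix.mul_apply, Matrix.transpose_apply]
  rw [this]
  exact Finset.sum_mul_sq_le_sq_mul_sq _ _ _

lemma gram_abs_le {m ρ : ℕ} (U : Matrix (Fin m) (Fin ρ) ℝ) (a i : Fin m) :
    |(U * Uᵀ) a i| ≤ Real.sqrt (∑ k, U a k ^ 2) * Real.sqrt (∑ k, U i k ^ 2) := by
  have h1 := gram_cs U a i
  have h2 : |(U * Uᵀ) a i| = Real.sqrt (((U * Uᵀ) a i) ^ 2) := (Real.sqrt_sq_eq_abs _).symm
  rw [h2, ← Real.sqrt_mul (by positivity)]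
  exact Real.sqrt_le_sqrt h1

lemma PT_entry {m n ρ : ℕ} (U : Matrix (Fin m) (Fin ρ) ℝ) (V : Matrix (Fin n) (Fin ρ) ℝ)
    (S : Matrix (Fin m) (Fin n) ℝ) (a : Fin m) (b : Fin n) :
    PT U V S a b = ∑ i, (U * Uᵀ) a i * S i b + ∑ j, S a j * (V * Vᵀ) j b
      - ∑ j, (∑ i, (U * Uᵀ) a i * S i j) * (V * Vᵀ) j b := by
  have h1 : U * Uᵀ * S = (U * Uᵀ) * S := rfl
  have h3 : U * Uᵀ * S * (V * Vᵀ) = ((U * Uᵀ) * S) * (V * Vᵀ) := rfl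
  simp only [PT, Matrix.sub_apply, Matrix.add_apply, h1, h3]
  rw [Matrix.mul_apply, Matrix.mul_apply, Matrix.mul_apply]
  congr 1

end AuxLemmas

set_option maxHeartbeats 2000000 in
/-- (Lemma 4.) Under Bernoulli sampling of the entries with probabilities
`q_ij ≥ min{c₀ log(m+n) L_ij, 1}` (relaxed leverage scores `L_ij`), for a fixed matrix `Z`,
any `c > 3` and `c₀ ≥ 68c`, with probability at least `1 − (m+n)^{3−c}`,
`‖(P_T R_Ω − P_T)(Z)‖_{μ(∞)} ≤ (1/2)‖Z‖_{μ(∞)}`. -/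
theorem stmt_7
    (m n ρ : ℕ) (hm : 0 < m) (hn : 0 < n) (hρ : 0 < ρ)
    (M : Matrix (Fin m) (Fin n) ℝ) (hrank : M.rank = ρ)
    (U : Matrix (Fin m) (Fin ρ) ℝ) (V : Matrix (Fin n) (Fin ρ) ℝ) (σ : Fin ρ → ℝ)
    (hU : Uᵀ * U = 1) (hV : Vᵀ * V = 1) (hσ : ∀ k, 0 < σ k)
    (hM : M = U * Matrix.diagonal σ * Vᵀ)
    (μ : Fin m → ℝ) (ν : Fin n → ℝ)
    (hμ : ∀ i, μ i = ((m : ℝ) / ρ) * ∑ k, U i k ^ 2)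
    (hν : ∀ j, ν j = ((n : ℝ) / ρ) * ∑ k, V j k ^ 2)
    (hμpos : ∀ i, 0 < μ i) (hνpos : ∀ j, 0 < ν j)
    (Z : Matrix (Fin m) (Fin n) ℝ) (c c₀ : ℝ) (hc : 3 < c) (hc₀ : 68 * c ≤ c₀)
    (L : Fin m → Fin n → ℝ)
    (hL : ∀ i j, L i j = μ i * ρ / m + ν j * ρ / n - (μ i * ρ / m) * (ν j * ρ / n))
    (q : Fin m → Fin n → ℝ) (hq0 : ∀ i j, 0 < q i j) (hq1 : ∀ i j, q i j ≤ 1)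
    (hq : ∀ i j, min (c₀ * Real.log ((m : ℝ) + n) * L i j) 1 ≤ q i j)
    (Ω' : Type) [MeasurableSpace Ω'] (P : Measure Ω') [IsProbabilityMeasure P]
    (δ : Fin m × Fin n → Ω' → Bool) (hmeas : ∀ ij, Measurable (δ ij))
    (hindep : iIndepFun δ P)
    (hbern : ∀ i j, P {ω | δ (i, j) ω = true} = ENNReal.ofReal (q i j)) :
    P {ω | muNormInf ρ μ ν (PT U V (RΩ {ij | δ ij ω = true} q Z) - PT U V Z)
          ≤ (1 / 2) * muNormInf ρ μ ν Z}
      ≥ ENNReal.ofReal (1 - ((m : ℝ) + n) ^ ((3 : ℝ) - c)) := by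
  classical
  haveI : Nonempty (Fin m) := ⟨⟨0, hm⟩⟩
  haveI : Nonempty (Fin n) := ⟨⟨0, hn⟩⟩
  have hmR : (0:ℝ) < m := by exact_mod_cast hm
  have hnR : (0:ℝ) < n := by exact_mod_cast hn
  have hρR : (0:ℝ) < ρ := by exact_mod_cast hρ
  have hm1 : (1:ℝ) ≤ m := by exact_mod_cast hm
  have hn1 : (1:ℝ) ≤ n := by exact_mod_cast hn
  set Lg : ℝ := Real.log ((m:ℝ) + n) with hLgdef
  have hLgpos : 0 < Lg := Real.log_pos (by linarith)
  have hcpos : (0:ℝ) < c := by linarith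
  have hc0pos : 0 < c₀ := by linarith
  have hc0Lg : 0 < c₀ * Lg := mul_pos hc0pos hLgpos
  have hrpow0 : (0:ℝ) ≤ ((m:ℝ) + n) ^ ((3:ℝ) - c) := Real.rpow_nonneg (by linarith) _
  set ar : Fin m → ℝ := fun i => ∑ k, U i k ^ 2 with hardef
  set br : Fin n → ℝ := fun j => ∑ k, V j k ^ 2 with hbrdef
  have harpos : ∀ i, 0 < ar i := by
    intro i
    have h1 := hμpos i
    rw [hμ i] at h1
    have h2 : (0:ℝ) < (m:ℝ) / ρ := div_pos hmR hρR
    nlinarith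
  have hbrpos : ∀ j, 0 < br j := by
    intro j
    have h1 := hνpos j
    rw [hν j] at h1
    have h2 : (0:ℝ) < (n:ℝ) / ρ := div_pos hnR hρR
    nlinarith
  have harle1 : ∀ i, ar i ≤ 1 := fun i => row_le_one U hU i
  have hbrle1 : ∀ j, br j ≤ 1 := fun j => row_le_one V hV j
  have hμρ : ∀ i, μ i * (ρ:ℝ) = m * ar i := by
    intro i; rw [hμ i]; field_simp; rfl
  have hνρ : ∀ j, ν j * (ρ:ℝ) = n * br j := by
    intro j; rw [hν j]; field_simp; rfl
  have hsqrtg : ∀ i, Real.sqrt ((m:ℝ)/(μ i * ρ)) = (Real.sqrt (ar i))⁻¹ := by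
    intro i
    rw [show (m:ℝ)/(μ i * ρ) = (ar i)⁻¹ by
      have h1 : ar i ≠ 0 := ne_of_gt (harpos i)
      have h2 : (m:ℝ) ≠ 0 := ne_of_gt hmR
      rw [hμρ i]
      field_simp]
    exact Real.sqrt_inv _
  have hsqrth : ∀ j, Real.sqrt ((n:ℝ)/(ν j * ρ)) = (Real.sqrt (br j))⁻¹ := by
    intro j
    rw [show (n:ℝ)/(ν j * ρ) = (br j)⁻¹ by
      have h1 : br j ≠ 0 := ne_of_gt (hbrpos j)
      have h2 : (n:ℝ) ≠ 0 := ne_of_gt hnR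
      rw [hνρ j]
      field_simp]
    exact Real.sqrt_inv _
  set K : ℝ := muNormInf ρ μ ν Z with hKdef
  have hleK : ∀ i j, |Z i j| * Real.sqrt ((m:ℝ)/(μ i * ρ)) * Real.sqrt ((n:ℝ)/(ν j * ρ)) ≤ K := by
    intro i j
    have h1 : |Z i j| * Real.sqrt ((m:ℝ)/(μ i * ρ)) * Real.sqrt ((n:ℝ)/(ν j * ρ))
        ≤ ⨆ j', |Z i j'| * Real.sqrt ((m:ℝ)/(μ i * ρ)) * Real.sqrt ((n:ℝ)/(ν j' * ρ)) :=
      le_ciSup (f := fun j' => |Z i j'| * Real.sqrt ((m:ℝ)/(μ i * ρ)) *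
        Real.sqrt ((n:ℝ)/(ν j' * ρ))) (Set.Finite.bddAbove (Set.finite_range _)) j
    have h2 : (⨆ j', |Z i j'| * Real.sqrt ((m:ℝ)/(μ i * ρ)) * Real.sqrt ((n:ℝ)/(ν j' * ρ)))
        ≤ K :=
      le_ciSup (f := fun i' => ⨆ j', |Z i' j'| * Real.sqrt ((m:ℝ)/(μ i' * ρ)) *
        Real.sqrt ((n:ℝ)/(ν j' * ρ))) (Set.Finite.bddAbove (Set.finite_range _)) i
    exact h1.trans h2
  have hK0 : 0 ≤ K :=
    le_trans (by positivity) (hleK ⟨0, hm⟩ ⟨0, hn⟩)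
  have hZbd : ∀ i j, |Z i j| ≤ K * Real.sqrt (ar i) * Real.sqrt (br j) := by
    intro i j
    have h1 := hleK i j
    rw [hsqrtg i, hsqrth j] at h1
    have ha : 0 < Real.sqrt (ar i) := Real.sqrt_pos.2 (harpos i)
    have hb : 0 < Real.sqrt (br j) := Real.sqrt_pos.2 (hbrpos j)
    have h2 : |Z i j| * (Real.sqrt (ar i))⁻¹ * (Real.sqrt (br j))⁻¹
        * (Real.sqrt (ar i) * Real.sqrt (br j)) ≤ K * (Real.sqrt (ar i) * Real.sqrt (br j)) :=
      mul_le_mul_of_nonneg_right h1 (by positivity)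
    calc |Z i j| = |Z i j| * (Real.sqrt (ar i))⁻¹ * (Real.sqrt (br j))⁻¹
        * (Real.sqrt (ar i) * Real.sqrt (br j)) := by field_simp
      _ ≤ K * (Real.sqrt (ar i) * Real.sqrt (br j)) := h2
      _ = K * Real.sqrt (ar i) * Real.sqrt (br j) := by ring
  by_cases hKz : K = 0
  · -- degenerate case : Z = 0
    have hZ0 : Z = 0 := by
      ext i j
      have := hZbd i j
      rw [hKz] at this
      simp only [zero_mul] at this
      exact abs_eq_zero.mp (le_antisymm this (abs_nonneg _))
    have hset : {ω | muNormInf ρ μ ν (PT U V (RΩ {ij | δ ij ω = true} q Z) - PT U V Z)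
          ≤ (1 / 2) * muNormInf ρ μ ν Z} = Set.univ := by
      ext ω
      simp only [Set.mem_setOf_eq, Set.mem_univ, iff_true]
      have h1 : RΩ {ij | δ ij ω = true} q Z = 0 := by
        ext i j
        simp [RΩ, hZ0]
      have h2 : PT U V (0 : Matrix (Fin m) (Fin n) ℝ) = 0 := by
        simp [PT, Matrix.mul_zero, Matrix.zero_mul]
      rw [h1, h2, hZ0, h2]
      have h3 : muNormInf ρ μ ν ((0 : Matrix (Fin m) (Fin n) ℝ) - 0) = 0 := by
        simp [muNormInf, Matrix.sub_apply, ciSup_const]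
      have h4 : muNormInf ρ μ ν (0 : Matrix (Fin m) (Fin n) ℝ) = 0 := by
        simp [muNormInf, ciSup_const]
      rw [h3, h4]
      norm_num
    rw [hset]
    simp only [measure_univ]
    exact le_trans (ENNReal.ofReal_le_one.2 (by linarith)) le_rfl
  · have hKpos : 0 < K := lt_of_le_of_ne hK0 (Ne.symm hKz)
    set Pm : Matrix (Fin m) (Fin m) ℝ := U * Uᵀ with hPmdef
    set Qm : Matrix (Fin n) (Fin n) ℝ := V * Vᵀ with hQmdef
    have hPaa : ∀ a, Pm a a = ar a := fun a => gram_diag U a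
    have hQbb : ∀ b, Qm b b = br b := fun b => gram_diag V b
    have hPsq : ∀ a, ∑ i, (Pm a i) ^ 2 = ar a := fun a => by
      rw [hPmdef]; rw [gram_sq_row U hU a, gram_diag]
    have hQsq : ∀ b, ∑ j, (Qm j b) ^ 2 = br b := by
      intro b
      have h1 : ∑ j, (Qm j b) ^ 2 = ∑ j, (Qm b j) ^ 2 :=
        Finset.sum_congr rfl (fun j _ => by rw [hQmdef, gram_symm V b j])
      rw [h1, hQmdef, gram_sq_row V hV b, gram_diag]
    have hPabs : ∀ a i, |Pm a i| ≤ Real.sqrt (ar a) * Real.sqrt (ar i) :=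
      fun a i => gram_abs_le U a i
    have hQabs : ∀ j b, |Qm j b| ≤ Real.sqrt (br j) * Real.sqrt (br b) :=
      fun j b => gram_abs_le V j b
    have hL' : ∀ i j, L i j = ar i + br j - ar i * br j := by
      intro i j
      rw [hL i j]
      rw [show μ i * (ρ:ℝ)/m = ar i from by rw [hμρ i]; field_simp]
      rw [show ν j * (ρ:ℝ)/n = br j from by rw [hνρ j]; field_simp]
    have hLpos : ∀ i j, 0 < L i j := by
      intro i j; rw [hL' i j]
      have h1 := mul_nonneg (hbrpos j).le (sub_nonneg.2 (harle1 i))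
      have h2 := harpos i
      nlinarith
    have hLle1 : ∀ i j, L i j ≤ 1 := by
      intro i j; rw [hL' i j]
      have h1 := mul_nonneg (sub_nonneg.2 (harle1 i)) (sub_nonneg.2 (hbrle1 j))
      nlinarith
    have hLgear : ∀ i j, ar i ≤ L i j := by
      intro i j; rw [hL' i j]
      have h1 := mul_nonneg (hbrpos j).le (sub_nonneg.2 (harle1 i))
      nlinarith
    have hLgebr : ∀ i j, br j ≤ L i j := by
      intro i j; rw [hL' i j]
      have h1 := mul_nonneg (harpos i).le (sub_nonneg.2 (hbrle1 j))
      nlinarith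
    have hqfrac : ∀ i j, (1 - q i j)/(q i j) ≤ 1/(c₀ * Lg * L i j) := by
      intro i j
      rcases le_or_gt (c₀ * Lg * L i j) 1 with h | h
      · have hq2 : c₀ * Lg * L i j ≤ q i j := by
          have := hq i j; rwa [min_eq_left h] at this
        have h3 : (1 - q i j)/(q i j) ≤ 1/(q i j) := by
          gcongr
          · exact (hq0 i j).le
          · linarith [hq0 i j]
        have h4 : 1/(q i j) ≤ 1/(c₀ * Lg * L i j) := by
          apply one_div_le_one_div_of_le
          · exact mul_pos hc0Lg (hLpos i j)
          · exact hq2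
        linarith
      · have hq2 : q i j = 1 := by
          have := hq i j; rw [min_eq_right h.le] at this
          linarith [hq1 i j]
        have h5 : (0:ℝ) < c₀ * Lg * L i j := mul_pos hc0Lg (hLpos i j)
        rw [hq2]
        simp only [sub_self, zero_div]
        exact div_nonneg zero_le_one h5.le
    have hqlow : ∀ i j, q i j < 1 → c₀ * Lg * L i j ≤ q i j := by
      intro i j h
      rcases le_or_gt (c₀ * Lg * L i j) 1 with h2 | h2
      · have := hq i j; rwa [min_eq_left h2] at this
      · exfalso
        have := hq i j; rw [min_eq_right h2.le] at this
        linarith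
    set Ka : Fin m → Fin n → ℝ := fun a b => K * Real.sqrt (ar a) * Real.sqrt (br b)
      with hKadef
    have hKapos : ∀ a b, 0 < Ka a b := fun a b =>
      mul_pos (mul_pos hKpos (Real.sqrt_pos.2 (harpos a))) (Real.sqrt_pos.2 (hbrpos b))
    set w : Fin m → Fin n → Fin m × Fin n → ℝ := fun a b p =>
      Z p.1 p.2 * ((if p.2 = b then Pm a p.1 else 0) + (if p.1 = a then Qm p.2 b else 0)
        - Pm a p.1 * Qm p.2 b) with hwdef
    have hwbd : ∀ a b p, |w a b p| ≤ Ka a b * L p.1 p.2 := by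
      rintro a b ⟨i, j⟩
      simp only [hwdef]
      have hZij := hZbd i j
      have hPai := hPabs a i
      have hQjb := hQabs j b
      have hsi : Real.sqrt (ar i) * Real.sqrt (ar i) = ar i := Real.mul_self_sqrt (harpos i).le
      have hsj : Real.sqrt (br j) * Real.sqrt (br j) = br j := Real.mul_self_sqrt (hbrpos j).le
      have hsa0 : (0:ℝ) ≤ Real.sqrt (ar a) := Real.sqrt_nonneg _
      have hsb0 : (0:ℝ) ≤ Real.sqrt (br b) := Real.sqrt_nonneg _
      have hsi0 : (0:ℝ) ≤ Real.sqrt (ar i) := Real.sqrt_nonneg _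
      have hsj0 : (0:ℝ) ≤ Real.sqrt (br j) := Real.sqrt_nonneg _
      have hKab0 : (0:ℝ) ≤ K * Real.sqrt (ar a) * Real.sqrt (br b) := by positivity
      by_cases h1 : j = b <;> by_cases h2 : i = a
      · -- i = a, j = b
        subst h1; subst h2
        simp only [eq_self_iff_true, if_true]
        have hE : Pm i i + Qm j j - Pm i i * Qm j j = L i j := by
          rw [hPaa i, hQbb j, hL' i j]
        rw [hE]
        rw [abs_mul, abs_of_pos (hLpos i j)]
        exact mul_le_mul_of_nonneg_right hZij (hLpos i j).le
      · -- i ≠ a, j = b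
        subst h1
        simp only [eq_self_iff_true, if_true, if_neg h2]
        have hE : Z i j * (Pm a i + 0 - Pm a i * Qm j j)
            = Z i j * Pm a i * (1 - br j) := by
          rw [hQbb j]; ring
        rw [hE, abs_mul, abs_mul]
        have h1Q : |1 - br j| ≤ 1 := by
          rw [abs_of_nonneg (by linarith [hbrle1 j])]
          linarith [hbrpos j]
        have step1 : |Z i j| * |Pm a i|
            ≤ (K * Real.sqrt (ar i) * Real.sqrt (br j)) * (Real.sqrt (ar a) * Real.sqrt (ar i)) :=
          mul_le_mul hZij hPai (abs_nonneg _) (by positivity)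
        have step2 : |Z i j| * |Pm a i| * |1 - br j|
            ≤ (K * Real.sqrt (ar i) * Real.sqrt (br j)) * (Real.sqrt (ar a) * Real.sqrt (ar i))
              * 1 :=
          mul_le_mul step1 h1Q (abs_nonneg _) (by positivity)
        have heq : (K * Real.sqrt (ar i) * Real.sqrt (br j))
              * (Real.sqrt (ar a) * Real.sqrt (ar i)) * 1
            = (K * Real.sqrt (ar a) * Real.sqrt (br j)) * (Real.sqrt (ar i) * Real.sqrt (ar i)) :=
          by ring
        have hfin : |Z i j| * |Pm a i| * |1 - br j|
            ≤ (K * Real.sqrt (ar a) * Real.sqrt (br j)) * ar i := by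
          rw [← hsi]; calc |Z i j| * |Pm a i| * |1 - br j| ≤ _ := step2
            _ = _ := heq
        calc |Z i j| * |Pm a i| * |1 - br j|
            ≤ (K * Real.sqrt (ar a) * Real.sqrt (br j)) * ar i := hfin
          _ ≤ (K * Real.sqrt (ar a) * Real.sqrt (br j)) * L i j :=
              mul_le_mul_of_nonneg_left (hLgear i j) (by positivity)
      · -- i = a, j ≠ b
        subst h2
        simp only [eq_self_iff_true, if_true, if_neg h1]
        have hE : Z i j * (0 + Qm j b - Pm i i * Qm j b)
            = Z i j * Qm j b * (1 - ar i) := by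
          rw [hPaa i]; ring
        rw [hE, abs_mul, abs_mul]
        have h1P : |1 - ar i| ≤ 1 := by
          rw [abs_of_nonneg (by linarith [harle1 i])]
          linarith [harpos i]
        have step1 : |Z i j| * |Qm j b|
            ≤ (K * Real.sqrt (ar i) * Real.sqrt (br j)) * (Real.sqrt (br j) * Real.sqrt (br b)) :=
          mul_le_mul hZij hQjb (abs_nonneg _) (by positivity)
        have step2 : |Z i j| * |Qm j b| * |1 - ar i|
            ≤ (K * Real.sqrt (ar i) * Real.sqrt (br j)) * (Real.sqrt (br j) * Real.sqrt (br b))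
              * 1 :=
          mul_le_mul step1 h1P (abs_nonneg _) (by positivity)
        have hfin : |Z i j| * |Qm j b| * |1 - ar i|
            ≤ (K * Real.sqrt (ar i) * Real.sqrt (br b)) * br j := by
          rw [← hsj]
          calc |Z i j| * |Qm j b| * |1 - ar i| ≤ _ := step2
            _ = (K * Real.sqrt (ar i) * Real.sqrt (br b))
                * (Real.sqrt (br j) * Real.sqrt (br j)) := by ring
        calc |Z i j| * |Qm j b| * |1 - ar i|
            ≤ (K * Real.sqrt (ar i) * Real.sqrt (br b)) * br j := hfin
          _ ≤ (K * Real.sqrt (ar i) * Real.sqrt (br b)) * L i j :=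
              mul_le_mul_of_nonneg_left (hLgebr i j) (by positivity)
      · -- i ≠ a, j ≠ b
        simp only [if_neg h1, if_neg h2]
        have hE : Z i j * (0 + 0 - Pm a i * Qm j b) = -(Z i j * Pm a i * Qm j b) := by ring
        rw [hE, abs_neg, abs_mul, abs_mul]
        have step1 : |Z i j| * |Pm a i|
            ≤ (K * Real.sqrt (ar i) * Real.sqrt (br j)) * (Real.sqrt (ar a) * Real.sqrt (ar i)) :=
          mul_le_mul hZij hPai (abs_nonneg _) (by positivity)
        have step2 : |Z i j| * |Pm a i| * |Qm j b|
            ≤ (K * Real.sqrt (ar i) * Real.sqrt (br j)) * (Real.sqrt (ar a) * Real.sqrt (ar i))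
              * (Real.sqrt (br j) * Real.sqrt (br b)) :=
          mul_le_mul step1 hQjb (abs_nonneg _) (by positivity)
        have hfin : |Z i j| * |Pm a i| * |Qm j b|
            ≤ (K * Real.sqrt (ar a) * Real.sqrt (br b)) * (ar i * br j) := by
          rw [← hsi, ← hsj]
          calc |Z i j| * |Pm a i| * |Qm j b| ≤ _ := step2
            _ = (K * Real.sqrt (ar a) * Real.sqrt (br b))
                * ((Real.sqrt (ar i) * Real.sqrt (ar i))
                  * (Real.sqrt (br j) * Real.sqrt (br j))) := by ring
        have harbr : ar i * br j ≤ L i j :=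
          le_trans (mul_le_of_le_one_right (harpos i).le (hbrle1 j)) (hLgear i j)
        calc |Z i j| * |Pm a i| * |Qm j b|
            ≤ (K * Real.sqrt (ar a) * Real.sqrt (br b)) * (ar i * br j) := hfin
          _ ≤ (K * Real.sqrt (ar a) * Real.sqrt (br b)) * L i j :=
              mul_le_mul_of_nonneg_left harbr (by positivity)
    have hvar : ∀ a b, ∑ p : Fin m × Fin n, (w a b p) ^ 2 * (1 - q p.1 p.2)/(q p.1 p.2)
        ≤ 4 * (Ka a b) ^ 2/(c₀ * Lg) := by
      intro a b
      set Br : Fin m × Fin n → ℝ := fun p =>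
        (Pm a p.1) ^ 2 * (Qm p.2 b) ^ 2 + (if p.2 = b then br b * (Pm a p.1) ^ 2 else 0)
          + (if p.1 = a then ar a * (Qm p.2 b) ^ 2 else 0)
          + (if p = (a, b) then ar a * br b else 0) with hBrdef
      have hZ2 : ∀ i j, Z i j ^ 2 ≤ K ^ 2 * (ar i * br j) := by
        intro i j
        have h0 : |Z i j| ^ 2 ≤ (K * Real.sqrt (ar i) * Real.sqrt (br j)) ^ 2 :=
          pow_le_pow_left₀ (abs_nonneg _) (hZbd i j) 2
        rw [sq_abs, mul_pow, mul_pow, Real.sq_sqrt (harpos i).le,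
          Real.sq_sqrt (hbrpos j).le] at h0
        calc Z i j ^ 2 ≤ K ^ 2 * ar i * br j := h0
          _ = K ^ 2 * (ar i * br j) := by ring
      have hw2 : ∀ i j, (w a b (i, j)) ^ 2 ≤ K ^ 2 * Br (i, j) * L i j := by
        intro i j
        have hP2 : (0:ℝ) ≤ (Pm a i) ^ 2 := sq_nonneg _
        have hQ2 : (0:ℝ) ≤ (Qm j b) ^ 2 := sq_nonneg _
        have hK2 : (0:ℝ) ≤ K ^ 2 := sq_nonneg _
        by_cases h1 : j = b <;> by_cases h2 : i = a
        · -- diagonal entry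
          subst h1; subst h2
          have hwval : w i j (i, j) = Z i j * L i j := by
            simp only [hwdef, eq_self_iff_true, if_true]
            rw [hPaa i, hQbb j, hL' i j]
          rw [hwval]
          have hBge : ar i * br j ≤ Br (i, j) := by
            simp only [hBrdef, eq_self_iff_true, if_true]
            nlinarith [sq_nonneg (Pm i i), sq_nonneg (Qm j j),
              mul_nonneg (sq_nonneg (Pm i i)) (sq_nonneg (Qm j j)),
              mul_nonneg (hbrpos j).le (sq_nonneg (Pm i i)),
              mul_nonneg (harpos i).le (sq_nonneg (Qm j j))]
          have hstep : (Z i j * L i j) ^ 2 ≤ (K ^ 2 * (ar i * br j)) * L i j ^ 2 := by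
            rw [mul_pow]
            exact mul_le_mul_of_nonneg_right (hZ2 i j) (sq_nonneg _)
          have hL2 : L i j ^ 2 ≤ L i j := by
            nlinarith [hLpos i j, hLle1 i j]
          calc (Z i j * L i j) ^ 2 ≤ (K ^ 2 * (ar i * br j)) * L i j ^ 2 := hstep
            _ ≤ (K ^ 2 * (ar i * br j)) * L i j :=
                mul_le_mul_of_nonneg_left hL2 (by positivity)
            _ ≤ (K ^ 2 * Br (i, j)) * L i j := by
                apply mul_le_mul_of_nonneg_right _ (hLpos i j).le
                exact mul_le_mul_of_nonneg_left hBge hK2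
            _ = K ^ 2 * Br (i, j) * L i j := by ring
        · -- i ≠ a, j = b
          subst h1
          have hwval : w a j (i, j) = Z i j * Pm a i * (1 - br j) := by
            simp only [hwdef, eq_self_iff_true, if_true, if_neg h2]
            rw [hQbb j]; ring
          rw [hwval]
          have hBge : br j * (Pm a i) ^ 2 ≤ Br (i, j) := by
            simp only [hBrdef, eq_self_iff_true, if_true,
              if_neg (show ¬(i, j) = (a, j) by simp [Prod.ext_iff, h2]), if_neg h2]
            nlinarith [mul_nonneg hP2 (sq_nonneg (Qm j j))]
          have h1m : (1 - br j) ^ 2 ≤ 1 := by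
            nlinarith [hbrpos j, hbrle1 j]
          have hstep : (Z i j * Pm a i * (1 - br j)) ^ 2
              ≤ (K ^ 2 * (ar i * br j)) * (Pm a i) ^ 2 := by
            have e1 : (Z i j * Pm a i * (1 - br j)) ^ 2
                = Z i j ^ 2 * (Pm a i) ^ 2 * (1 - br j) ^ 2 := by ring
            rw [e1]
            calc Z i j ^ 2 * (Pm a i) ^ 2 * (1 - br j) ^ 2
                ≤ Z i j ^ 2 * (Pm a i) ^ 2 * 1 :=
                  mul_le_mul_of_nonneg_left h1m (by positivity)
              _ = Z i j ^ 2 * (Pm a i) ^ 2 := by ring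
              _ ≤ (K ^ 2 * (ar i * br j)) * (Pm a i) ^ 2 :=
                  mul_le_mul_of_nonneg_right (hZ2 i j) hP2
          calc (Z i j * Pm a i * (1 - br j)) ^ 2
              ≤ (K ^ 2 * (ar i * br j)) * (Pm a i) ^ 2 := hstep
            _ = (K ^ 2 * (br j * (Pm a i) ^ 2)) * ar i := by ring
            _ ≤ (K ^ 2 * Br (i, j)) * ar i := by
                apply mul_le_mul_of_nonneg_right _ (harpos i).le
                exact mul_le_mul_of_nonneg_left hBge hK2
            _ ≤ (K ^ 2 * Br (i, j)) * L i j := by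
                apply mul_le_mul_of_nonneg_left (hLgear i j)
                have hBr0 : (0:ℝ) ≤ Br (i, j) := by nlinarith [hbrpos j, hP2]
                positivity
            _ = K ^ 2 * Br (i, j) * L i j := by ring
        · -- i = a, j ≠ b
          subst h2
          have hwval : w i b (i, j) = Z i j * Qm j b * (1 - ar i) := by
            simp only [hwdef, eq_self_iff_true, if_true, if_neg h1]
            rw [hPaa i]; ring
          rw [hwval]
          have hBge : ar i * (Qm j b) ^ 2 ≤ Br (i, j) := by
            simp only [hBrdef, eq_self_iff_true, if_true,
              if_neg (show ¬(i, j) = (i, b) by simp [Prod.ext_iff, h1]), if_neg h1]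
            nlinarith [mul_nonneg (sq_nonneg (Pm i i)) hQ2]
          have h1m : (1 - ar i) ^ 2 ≤ 1 := by
            nlinarith [harpos i, harle1 i]
          have hstep : (Z i j * Qm j b * (1 - ar i)) ^ 2
              ≤ (K ^ 2 * (ar i * br j)) * (Qm j b) ^ 2 := by
            have e1 : (Z i j * Qm j b * (1 - ar i)) ^ 2
                = Z i j ^ 2 * (Qm j b) ^ 2 * (1 - ar i) ^ 2 := by ring
            rw [e1]
            calc Z i j ^ 2 * (Qm j b) ^ 2 * (1 - ar i) ^ 2
                ≤ Z i j ^ 2 * (Qm j b) ^ 2 * 1 :=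
                  mul_le_mul_of_nonneg_left h1m (by positivity)
              _ = Z i j ^ 2 * (Qm j b) ^ 2 := by ring
              _ ≤ (K ^ 2 * (ar i * br j)) * (Qm j b) ^ 2 :=
                  mul_le_mul_of_nonneg_right (hZ2 i j) hQ2
          calc (Z i j * Qm j b * (1 - ar i)) ^ 2
              ≤ (K ^ 2 * (ar i * br j)) * (Qm j b) ^ 2 := hstep
            _ = (K ^ 2 * (ar i * (Qm j b) ^ 2)) * br j := by ring
            _ ≤ (K ^ 2 * Br (i, j)) * br j := by
                apply mul_le_mul_of_nonneg_right _ (hbrpos j).le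
                exact mul_le_mul_of_nonneg_left hBge hK2
            _ ≤ (K ^ 2 * Br (i, j)) * L i j := by
                apply mul_le_mul_of_nonneg_left (hLgebr i j)
                have hBr0 : (0:ℝ) ≤ Br (i, j) := by nlinarith [harpos i, hQ2]
                positivity
            _ = K ^ 2 * Br (i, j) * L i j := by ring
        · -- i ≠ a, j ≠ b
          have hwval : w a b (i, j) = -(Z i j * Pm a i * Qm j b) := by
            simp only [hwdef, if_neg h1, if_neg h2]
            ring
          rw [hwval]
          have hBge : (Pm a i) ^ 2 * (Qm j b) ^ 2 ≤ Br (i, j) := by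
            simp only [hBrdef, if_neg h1, if_neg h2,
              if_neg (show ¬(i, j) = (a, b) by simp [Prod.ext_iff, h2])]
            nlinarith [mul_nonneg hP2 hQ2]
          have harbr : ar i * br j ≤ L i j :=
            le_trans (mul_le_of_le_one_right (harpos i).le (hbrle1 j)) (hLgear i j)
          have hstep : (-(Z i j * Pm a i * Qm j b)) ^ 2
              ≤ (K ^ 2 * (ar i * br j)) * ((Pm a i) ^ 2 * (Qm j b) ^ 2) := by
            have e1 : (-(Z i j * Pm a i * Qm j b)) ^ 2
                = Z i j ^ 2 * ((Pm a i) ^ 2 * (Qm j b) ^ 2) := by ring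
            rw [e1]
            exact mul_le_mul_of_nonneg_right (hZ2 i j) (by positivity)
          calc (-(Z i j * Pm a i * Qm j b)) ^ 2
              ≤ (K ^ 2 * (ar i * br j)) * ((Pm a i) ^ 2 * (Qm j b) ^ 2) := hstep
            _ ≤ (K ^ 2 * L i j) * ((Pm a i) ^ 2 * (Qm j b) ^ 2) := by
                apply mul_le_mul_of_nonneg_right _ (by positivity)
                exact mul_le_mul_of_nonneg_left harbr hK2
            _ = (K ^ 2 * ((Pm a i) ^ 2 * (Qm j b) ^ 2)) * L i j := by ring
            _ ≤ (K ^ 2 * Br (i, j)) * L i j := by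
                apply mul_le_mul_of_nonneg_right _ (hLpos i j).le
                exact mul_le_mul_of_nonneg_left hBge hK2
            _ = K ^ 2 * Br (i, j) * L i j := by ring
      have hper : ∀ (p : Fin m × Fin n),
          (w a b p) ^ 2 * (1 - q p.1 p.2)/(q p.1 p.2) ≤ K ^ 2/(c₀ * Lg) * Br p := by
        rintro ⟨i, j⟩
        have hfrac := hqfrac i j
        have hLp := hLpos i j
        calc (w a b (i, j)) ^ 2 * (1 - q i j)/(q i j)
            = (w a b (i, j)) ^ 2 * ((1 - q i j)/(q i j)) := by rw [mul_div_assoc]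
          _ ≤ (w a b (i, j)) ^ 2 * (1/(c₀ * Lg * L i j)) :=
              mul_le_mul_of_nonneg_left hfrac (sq_nonneg _)
          _ ≤ (K ^ 2 * Br (i, j) * L i j) * (1/(c₀ * Lg * L i j)) :=
              mul_le_mul_of_nonneg_right (hw2 i j) (by positivity)
          _ = K ^ 2/(c₀ * Lg) * Br (i, j) := by
              field_simp
      have hsum : ∑ p : Fin m × Fin n, Br p = 4 * (ar a * br b) := by
        have hs4 : ∑ p : Fin m × Fin n, (if p = (a, b) then ar a * br b else 0)
            = ar a * br b := by
          simp [Finset.sum_ite_eq']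
        have hs1 : ∑ p : Fin m × Fin n, (Pm a p.1) ^ 2 * (Qm p.2 b) ^ 2
            = ar a * br b := by
          simp only [Fintype.sum_prod_type]
          rw [← Finset.sum_mul_sum]
          rw [hPsq a, hQsq b]
        have hs2 : ∑ p : Fin m × Fin n, (if p.2 = b then br b * (Pm a p.1) ^ 2 else 0)
            = br b * ar a := by
          simp only [Fintype.sum_prod_type]
          have h1 : ∀ i, ∑ j, (if j = b then br b * (Pm a i) ^ 2 else 0)
              = br b * (Pm a i) ^ 2 := fun i => by simp [Finset.sum_ite_eq']
          rw [Finset.sum_congr rfl (fun i _ => h1 i), ← Finset.mul_sum, hPsq a]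
        have hs3 : ∑ p : Fin m × Fin n, (if p.1 = a then ar a * (Qm p.2 b) ^ 2 else 0)
            = ar a * br b := by
          simp only [Fintype.sum_prod_type]
          rw [Finset.sum_comm]
          have h1 : ∀ j, ∑ i, (if i = a then ar a * (Qm j b) ^ 2 else 0)
              = ar a * (Qm j b) ^ 2 := fun j => by simp [Finset.sum_ite_eq']
          rw [Finset.sum_congr rfl (fun j _ => h1 j), ← Finset.mul_sum, hQsq b]
        calc ∑ p : Fin m × Fin n, Br p
            = ∑ p : Fin m × Fin n, ((Pm a p.1) ^ 2 * (Qm p.2 b) ^ 2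
              + (if p.2 = b then br b * (Pm a p.1) ^ 2 else 0)
              + (if p.1 = a then ar a * (Qm p.2 b) ^ 2 else 0)
              + (if p = (a, b) then ar a * br b else 0)) := by rw [hBrdef]
          _ = 4 * (ar a * br b) := by
              rw [Finset.sum_add_distrib, Finset.sum_add_distrib, Finset.sum_add_distrib]
              rw [hs1, hs2, hs3, hs4]
              ring
      calc ∑ p : Fin m × Fin n, (w a b p) ^ 2 * (1 - q p.1 p.2)/(q p.1 p.2)
          ≤ ∑ p : Fin m × Fin n, K ^ 2/(c₀ * Lg) * Br p :=
            Finset.sum_le_sum (fun p _ => hper p)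
        _ = K ^ 2/(c₀ * Lg) * ∑ p : Fin m × Fin n, Br p := by rw [← Finset.mul_sum]
        _ = K ^ 2/(c₀ * Lg) * (4 * (ar a * br b)) := by rw [hsum]
        _ = 4 * (Ka a b) ^ 2/(c₀ * Lg) := by
            rw [hKadef]
            simp only []
            rw [mul_pow, mul_pow, Real.sq_sqrt (harpos a).le, Real.sq_sqrt (hbrpos b).le]
            ring
    set D : Fin m → Fin n → Ω' → ℝ := fun a b ω =>
      ∑ p : Fin m × Fin n, w a b p * (if δ p ω then (q p.1 p.2)⁻¹ - 1 else -1) with hDdef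
    have hkey : ∀ ω a b, (PT U V (RΩ {ij | δ ij ω = true} q Z) - PT U V Z) a b = D a b ω := by
      intro ω a b
      set W : Fin m → Fin n → ℝ :=
        fun i j => Z i j * (if δ (i, j) ω then (q i j)⁻¹ - 1 else -1) with hWdef
      have hXZ : ∀ i j, RΩ {ij | δ ij ω = true} q Z i j - Z i j = W i j := by
        intro i j
        rw [hWdef]
        by_cases h : δ (i, j) ω <;> simp [RΩ, Set.mem_setOf_eq, h] <;> ring
      have hsummand : ∀ (p : Fin m × Fin n),
          w a b p * (if δ p ω then (q p.1 p.2)⁻¹ - 1 else -1)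
          = (if p.2 = b then Pm a p.1 * W p.1 p.2 else 0)
            + ((if p.1 = a then W p.1 p.2 * Qm p.2 b else 0)
              - Pm a p.1 * W p.1 p.2 * Qm p.2 b) := by
        rintro ⟨i, j⟩
        simp only [hwdef, hWdef]
        by_cases h1 : j = b <;> by_cases h2 : i = a <;>
          simp only [h1, h2, if_true, if_false] <;> ring
      have c1 : ∑ i, ∑ j, (if j = b then Pm a i * W i j else 0) = ∑ i, Pm a i * W i b :=
        Finset.sum_congr rfl (fun i _ => by simp [Finset.sum_ite_eq'])
      have c2 : ∑ i, ∑ j, (if i = a then W i j * Qm j b else 0) = ∑ j, W a j * Qm j b := by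
        rw [Finset.sum_comm]
        exact Finset.sum_congr rfl (fun j _ => by simp [Finset.sum_ite_eq'])
      have c3 : ∑ i, ∑ j, Pm a i * W i j * Qm j b
          = ∑ j, (∑ i, Pm a i * W i j) * Qm j b := by
        rw [Finset.sum_comm]
        exact Finset.sum_congr rfl (fun j _ => by rw [Finset.sum_mul])
      have hR : D a b ω = (∑ i, Pm a i * W i b) + ((∑ j, W a j * Qm j b)
          - ∑ j, (∑ i, Pm a i * W i j) * Qm j b) := by
        rw [hDdef]
        calc (∑ p : Fin m × Fin n, w a b p * (if δ p ω then (q p.1 p.2)⁻¹ - 1 else -1))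
            = ∑ p : Fin m × Fin n, ((if p.2 = b then Pm a p.1 * W p.1 p.2 else 0)
              + ((if p.1 = a then W p.1 p.2 * Qm p.2 b else 0)
                - Pm a p.1 * W p.1 p.2 * Qm p.2 b)) :=
              Finset.sum_congr rfl (fun p _ => hsummand p)
          _ = ∑ i, ∑ j, ((if j = b then Pm a i * W i j else 0)
              + ((if i = a then W i j * Qm j b else 0) - Pm a i * W i j * Qm j b)) :=
              Fintype.sum_prod_type _
          _ = _ := by
              simp only [Finset.sum_add_distrib, Finset.sum_sub_distrib]
              rw [c1, c2, c3]
      have e1 : ∑ i, Pm a i * RΩ {ij | δ ij ω = true} q Z i b - ∑ i, Pm a i * Z i b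
          = ∑ i, Pm a i * W i b := by
        rw [← Finset.sum_sub_distrib]
        exact Finset.sum_congr rfl (fun i _ => by rw [← mul_sub, hXZ i b])
      have e2 : ∑ j, RΩ {ij | δ ij ω = true} q Z a j * Qm j b - ∑ j, Z a j * Qm j b
          = ∑ j, W a j * Qm j b := by
        rw [← Finset.sum_sub_distrib]
        exact Finset.sum_congr rfl (fun j _ => by rw [← sub_mul, hXZ a j])
      have e3 : ∑ j, (∑ i, Pm a i * RΩ {ij | δ ij ω = true} q Z i j) * Qm j b
            - ∑ j, (∑ i, Pm a i * Z i j) * Qm j b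
          = ∑ j, (∑ i, Pm a i * W i j) * Qm j b := by
        rw [← Finset.sum_sub_distrib]
        refine Finset.sum_congr rfl (fun j _ => ?_)
        rw [← sub_mul, ← Finset.sum_sub_distrib]
        congr 1
        exact Finset.sum_congr rfl (fun i _ => by rw [← mul_sub, hXZ i j])
      rw [Matrix.sub_apply, PT_entry U V (RΩ {ij | δ ij ω = true} q Z) a b,
        PT_entry U V Z a b, ← hPmdef, ← hQmdef, hR]
      linarith [e1, e2, e3]
    have hDmeas : ∀ a b, Measurable (D a b) := by
      intro a b
      apply Finset.measurable_sum
      intro p _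
      exact (measurable_of_countable
        (fun bo : Bool => w a b p * (if bo then (q p.1 p.2)⁻¹ - 1 else -1))).comp (hmeas p)
    have hbern' : ∀ p : Fin m × Fin n, P {ω | δ p ω = true} = ENNReal.ofReal (q p.1 p.2) := by
      intro p
      obtain ⟨i, j⟩ := p
      exact hbern i j
    set E0 : ENNReal := ENNReal.ofReal (Real.exp (-(c₀ * Lg)/64)) with hE0def
    -- the two Chernoff tails
    have htails : ∀ a b, P {ω | Ka a b/2 ≤ D a b ω} ≤ E0 ∧ P {ω | Ka a b/2 ≤ -D a b ω} ≤ E0 := by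
      intro a b
      have hKab := hKapos a b
      set t0 : ℝ := c₀ * Lg / (16 * Ka a b) with ht0def
      have ht0pos : 0 < t0 := by rw [ht0def]; positivity
      have habs : ∀ (p : Fin m × Fin n), |w a b p| * ((1 - q p.1 p.2)/(q p.1 p.2))
          ≤ Ka a b/(c₀ * Lg) := by
        intro p
        have hnn : (0:ℝ) ≤ (1 - q p.1 p.2)/(q p.1 p.2) :=
          div_nonneg (by linarith [hq1 p.1 p.2]) (hq0 p.1 p.2).le
        have h1 : |w a b p| * ((1 - q p.1 p.2)/(q p.1 p.2))
            ≤ (Ka a b * L p.1 p.2) * (1/(c₀ * Lg * L p.1 p.2)) :=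
          mul_le_mul (hwbd a b p) (hqfrac p.1 p.2) hnn
            (mul_nonneg hKab.le (hLpos p.1 p.2).le)
        have h2 : (Ka a b * L p.1 p.2) * (1/(c₀ * Lg * L p.1 p.2)) = Ka a b/(c₀ * Lg) := by
          have hLne : L p.1 p.2 ≠ 0 := (hLpos p.1 p.2).ne'
          field_simp
        rw [h2] at h1
        exact h1
      have hx1 : ∀ (p : Fin m × Fin n), |t0 * (w a b p * (1 - q p.1 p.2) / q p.1 p.2)| ≤ 1 := by
        intro p
        have e1 : |t0 * (w a b p * (1 - q p.1 p.2) / q p.1 p.2)|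
            = t0 * (|w a b p| * ((1 - q p.1 p.2)/(q p.1 p.2))) := by
          rw [abs_mul, abs_of_pos ht0pos, mul_div_assoc, abs_mul, abs_div,
            abs_of_nonneg (show (0:ℝ) ≤ 1 - q p.1 p.2 by linarith [hq1 p.1 p.2]),
            abs_of_pos (hq0 p.1 p.2)]
        rw [e1]
        have h3 : t0 * (|w a b p| * ((1 - q p.1 p.2)/(q p.1 p.2)))
            ≤ t0 * (Ka a b/(c₀ * Lg)) :=
          mul_le_mul_of_nonneg_left (habs p) ht0pos.le
        have h4 : t0 * (Ka a b/(c₀ * Lg)) = 1/16 := by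
          rw [ht0def]
          field_simp
        linarith
      have hy1 : ∀ (p : Fin m × Fin n), q p.1 p.2 < 1 → |t0 * w a b p| ≤ 1 := by
        intro p hlt
        have h0 := hqlow p.1 p.2 hlt
        have hLle : L p.1 p.2 ≤ 1/(c₀ * Lg) := by
          rw [le_div_iff₀ hc0Lg]
          nlinarith [hq1 p.1 p.2]
        have h1 : |t0 * w a b p| = t0 * |w a b p| := by
          rw [abs_mul, abs_of_pos ht0pos]
        rw [h1]
        have h2 : t0 * |w a b p| ≤ t0 * (Ka a b * (1/(c₀ * Lg))) := by
          apply mul_le_mul_of_nonneg_left _ ht0pos.le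
          calc |w a b p| ≤ Ka a b * L p.1 p.2 := hwbd a b p
            _ ≤ Ka a b * (1/(c₀ * Lg)) := mul_le_mul_of_nonneg_left hLle hKab.le
        have h3 : t0 * (Ka a b * (1/(c₀ * Lg))) = 1/16 := by
          rw [ht0def]
          field_simp
        linarith
      have hexp : -t0 * (Ka a b/2)
          + t0 ^ 2 * (∑ p : Fin m × Fin n, (w a b p) ^ 2 * (1 - q p.1 p.2)/(q p.1 p.2))
          ≤ -(c₀ * Lg)/64 := by
        have hV := hvar a b
        have h2 : t0 ^ 2 * (∑ p : Fin m × Fin n, (w a b p) ^ 2 * (1 - q p.1 p.2)/(q p.1 p.2))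
            ≤ t0 ^ 2 * (4 * (Ka a b) ^ 2/(c₀ * Lg)) :=
          mul_le_mul_of_nonneg_left hV (sq_nonneg _)
        have h3 : t0 ^ 2 * (4 * (Ka a b) ^ 2/(c₀ * Lg)) = (c₀ * Lg)/64 := by
          rw [ht0def]
          field_simp
          ring
        have h4 : -t0 * (Ka a b/2) = -((c₀ * Lg)/32) := by
          rw [ht0def]
          field_simp
          ring
        linarith
      constructor
      · have hup := tail_bound P δ hmeas hindep (fun p => q p.1 p.2)
          (fun p => hq0 p.1 p.2) (fun p => hq1 p.1 p.2) hbern'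
          (fun p => w a b p) t0 (Ka a b/2) ht0pos.le hx1 hy1
        refine le_trans hup ?_
        rw [hE0def]
        exact ENNReal.ofReal_le_ofReal (Real.exp_le_exp.2 hexp)
      · have hx2 : ∀ (p : Fin m × Fin n),
            |t0 * (-(w a b p) * (1 - q p.1 p.2) / q p.1 p.2)| ≤ 1 := by
          intro p
          have e1 : t0 * (-(w a b p) * (1 - q p.1 p.2) / q p.1 p.2)
              = -(t0 * (w a b p * (1 - q p.1 p.2) / q p.1 p.2)) := by ring
          rw [e1, abs_neg]
          exact hx1 p
        have hy2 : ∀ (p : Fin m × Fin n), q p.1 p.2 < 1 → |t0 * -(w a b p)| ≤ 1 := by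
          intro p hlt
          rw [mul_neg, abs_neg]
          exact hy1 p hlt
        have hlo := tail_bound P δ hmeas hindep (fun p => q p.1 p.2)
          (fun p => hq0 p.1 p.2) (fun p => hq1 p.1 p.2) hbern'
          (fun p => -(w a b p)) t0 (Ka a b/2) ht0pos.le hx2 hy2
        simp only [neg_mul, Finset.sum_neg_distrib, neg_sq] at hlo
        refine le_trans hlo ?_
        rw [hE0def]
        exact ENNReal.ofReal_le_ofReal (Real.exp_le_exp.2 (by linarith [hexp]))
    set Bad : Set Ω' := ⋃ a, ⋃ b,
        ({ω | Ka a b/2 ≤ D a b ω} ∪ {ω | Ka a b/2 ≤ -D a b ω}) with hBaddef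
    have hBadm : MeasurableSet Bad := by
      apply MeasurableSet.iUnion
      intro a
      apply MeasurableSet.iUnion
      intro b
      exact (measurableSet_le measurable_const (hDmeas a b)).union
        (measurableSet_le measurable_const (hDmeas a b).neg)
    have hGood : Badᶜ ⊆ {ω | muNormInf ρ μ ν
        (PT U V (RΩ {ij | δ ij ω = true} q Z) - PT U V Z) ≤ (1 / 2) * K} := by
      intro ω hω
      simp only [hBaddef, Set.mem_compl_iff, Set.mem_iUnion, not_exists, Set.mem_union,
        not_or, Set.mem_setOf_eq] at hω
      have habs : ∀ a b, |D a b ω| ≤ Ka a b / 2 := by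
        intro a b
        obtain ⟨h1, h2⟩ := hω a b
        rw [abs_le]
        constructor <;> [linarith [not_le.1 h2]; linarith [not_le.1 h1]]
      simp only [Set.mem_setOf_eq, muNormInf]
      apply ciSup_le
      intro a
      apply ciSup_le
      intro b
      rw [hkey ω a b, hsqrtg a, hsqrth b]
      have hsa : 0 < Real.sqrt (ar a) := Real.sqrt_pos.2 (harpos a)
      have hsb : 0 < Real.sqrt (br b) := Real.sqrt_pos.2 (hbrpos b)
      calc |D a b ω| * (Real.sqrt (ar a))⁻¹ * (Real.sqrt (br b))⁻¹
          ≤ (Ka a b / 2) * (Real.sqrt (ar a))⁻¹ * (Real.sqrt (br b))⁻¹ := by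
            gcongr
            exact habs a b
        _ = (1/2) * K := by rw [hKadef]; field_simp
    have hPBad : P Bad ≤ ENNReal.ofReal (((m:ℝ) + n) ^ ((3:ℝ) - c)) := by
      have h1 : P Bad ≤ ∑' (a : Fin m), ∑' (b : Fin n), (E0 + E0) := by
        refine le_trans (measure_iUnion_le _) (ENNReal.tsum_le_tsum fun a => ?_)
        refine le_trans (measure_iUnion_le _) (ENNReal.tsum_le_tsum fun b => ?_)
        exact le_trans (measure_union_le _ _) (add_le_add (htails a b).1 (htails a b).2)
      have h2 : ∑' (a : Fin m), ∑' (b : Fin n), (E0 + E0) = (m * n : ℕ) * (E0 + E0) := by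
        rw [tsum_fintype]
        simp only [tsum_fintype, Finset.sum_const, Finset.card_univ, Fintype.card_fin,
          nsmul_eq_mul]
        push_cast
        ring
      have h3 : ((m * n : ℕ) : ENNReal) * (E0 + E0)
          = ENNReal.ofReal (((m:ℝ) * n) * (2 * Real.exp (-(c₀ * Lg)/64))) := by
        rw [hE0def, ← ENNReal.ofReal_add (Real.exp_pos _).le (Real.exp_pos _).le]
        rw [← ENNReal.ofReal_natCast (m * n)]
        rw [← ENNReal.ofReal_mul (by positivity)]
        congr 1
        push_cast
        ring
      have h4 : ((m:ℝ) * n) * (2 * Real.exp (-(c₀ * Lg)/64)) ≤ ((m:ℝ) + n) ^ ((3:ℝ) - c) := by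
        have hxy : Real.exp Lg = (m:ℝ) + n := Real.exp_log (by linarith)
        have hmn : ((m:ℝ) * n) * 2 ≤ ((m:ℝ) + n) ^ (2:ℕ) := by
          nlinarith [sq_nonneg ((m:ℝ) - n)]
        have hcoef : Lg + Lg + (-(c₀ * Lg)/64) ≤ Lg * (3 - c) := by
          have hc2 : 2 - c₀/64 ≤ 3 - c := by linarith
          have := mul_le_mul_of_nonneg_left hc2 hLgpos.le
          nlinarith [hLgpos]
        calc ((m:ℝ) * n) * (2 * Real.exp (-(c₀ * Lg)/64))
            = ((m:ℝ) * n * 2) * Real.exp (-(c₀ * Lg)/64) := by ring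
          _ ≤ (((m:ℝ) + n) ^ (2:ℕ)) * Real.exp (-(c₀ * Lg)/64) := by
              exact mul_le_mul_of_nonneg_right hmn (Real.exp_pos _).le
          _ = Real.exp (Lg + Lg + (-(c₀ * Lg)/64)) := by
              rw [← hxy, Real.exp_add, Real.exp_add]
              ring
          _ ≤ Real.exp (Lg * (3 - c)) := Real.exp_le_exp.2 hcoef
          _ = ((m:ℝ) + n) ^ ((3:ℝ) - c) := by
              rw [Real.rpow_def_of_pos (by linarith)]
      calc P Bad ≤ (m * n : ℕ) * (E0 + E0) := h2 ▸ h1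
        _ = ENNReal.ofReal (((m:ℝ) * n) * (2 * Real.exp (-(c₀ * Lg)/64))) := h3
        _ ≤ _ := ENNReal.ofReal_le_ofReal h4
    calc P {ω | muNormInf ρ μ ν (PT U V (RΩ {ij | δ ij ω = true} q Z) - PT U V Z)
          ≤ (1 / 2) * K}
        ≥ P Badᶜ := measure_mono hGood
      _ = 1 - P Bad := prob_compl_eq_one_sub hBadm
      _ ≥ 1 - ENNReal.ofReal (((m:ℝ) + n) ^ ((3:ℝ) - c)) := tsub_le_tsub_left hPBad 1
      _ ≥ ENNReal.ofReal (1 - ((m:ℝ) + n) ^ ((3:ℝ) - c)) := by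
          rw [ENNReal.ofReal_sub 1 hrpow0, ENNReal.ofReal_one]
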